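/- Suppose the variance of the posterior μ_{t,z} is bounded by a constant M uniformly over (t,z) ∈ [0,t₀] × ℝ for some t₀ ∈ [0,1). Then z ↦ h(t,z) is Lipschitz continuous with constant M/(1-t₀), uniformly in t ∈ [0,t₀]. -/

import Mathlib

open Real Set MeasureTheory Metric

/-- The likelihood weight for the pinning point `u`, given `Z_t = z` (with `Z_0 = 0`). -/
noncomputable def w (t z u : ℝ) : ℝ :=
  Real.exp (u * z / (1 - t) - t * u ^ 2 / (2 * (1 - t)))

/-- The posterior distribution `μ_{t,z}` of the pinning point. -/
noncomputable def post (μ : Measure ℝ) (t z : ℝ) : Measure ℝ :=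
  μ.withDensity (fun u => ENNReal.ofReal (w t z u / ∫ u, w t z u ∂μ))

/-- The posterior mean `h(t,z)` of the pinning point. -/
noncomputable def h (μ : Measure ℝ) (t z : ℝ) : ℝ :=
  (∫ u, u * w t z u ∂μ) / ∫ u, w t z u ∂μ

/-- The variance of the posterior distribution `μ_{t,z}`. -/
noncomputable def postVar (μ : Measure ℝ) (t z : ℝ) : ℝ :=
  (∫ u, u ^ 2 ∂(post μ t z)) - (∫ u, u ∂(post μ t z)) ^ 2

lemma w_pos (t z u : ℝ) : 0 < w t z u := Real.exp_pos _

lemma w_cont (t z : ℝ) : Continuous fun u => w t z u := by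
  unfold w; fun_prop

lemma w_hasDerivAt (t u z : ℝ) :
    HasDerivAt (fun z => w t z u) (u / (1 - t) * w t z u) z := by
  have h1 : HasDerivAt (fun z : ℝ => u * z / (1 - t) - t * u ^ 2 / (2 * (1 - t)))
      (u / (1 - t)) z := by
    have h2 : HasDerivAt (fun z : ℝ => u * z / (1 - t)) (u / (1 - t)) z := by
      have h2' := hasDerivAt_mul_const (x := z) (u / (1 - t))
      have heq : (fun x : ℝ => x * (u / (1 - t))) = fun z : ℝ => u * z / (1 - t) := by
        ext y; ring
      rwa [heq] at h2'
    simpa using h2.sub_const (t * u ^ 2 / (2 * (1 - t)))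
  simpa [w, mul_comm] using h1.exp

lemma w_le (t z u x : ℝ) (h1 : 0 < 1 - t) (hx : |x - z| ≤ 1) :
    w t x u ≤ w t (z + 1) u + w t (z - 1) u := by
  have hx1 : x ≤ z + 1 := by have := abs_le.1 hx; linarith [this.2]
  have hx2 : z - 1 ≤ x := by have := abs_le.1 hx; linarith [this.1]
  rcases le_or_gt 0 u with hu | hu
  · have h2 : w t x u ≤ w t (z + 1) u := by
      unfold w
      apply Real.exp_le_exp.2
      have h3 : u * x ≤ u * (z + 1) := mul_le_mul_of_nonneg_left hx1 hu
      have h4 : u * x / (1 - t) ≤ u * (z + 1) / (1 - t) := by gcongr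
      linarith
    linarith [w_pos t (z - 1) u]
  · have h2 : w t x u ≤ w t (z - 1) u := by
      unfold w
      apply Real.exp_le_exp.2
      have h3 : u * x ≤ u * (z - 1) := mul_le_mul_of_nonpos_left hx2 hu.le
      have h4 : u * x / (1 - t) ≤ u * (z - 1) / (1 - t) := by gcongr
      linarith
    linarith [w_pos t (z + 1) u]

lemma G_deriv (μ : Measure ℝ) (t : ℝ) (h1 : 0 < 1 - t)
    (hint : ∀ z : ℝ, ∀ k : ℕ, k ≤ 2 → Integrable (fun u => u ^ k * w t z u) μ)
    (k : ℕ) (hk : k ≤ 1) (z : ℝ) :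
    HasDerivAt (fun z => ∫ u, u ^ k * w t z u ∂μ)
      ((∫ u, u ^ (k + 1) * w t z u ∂μ) / (1 - t)) z := by
  have habs : ∀ z' u : ℝ, |u ^ (k + 1) * w t z' u| = |u| ^ (k + 1) * w t z' u := by
    intro z' u
    rw [abs_mul, abs_pow, abs_of_pos (w_pos t z' u)]
  have key := hasDerivAt_integral_of_dominated_loc_of_deriv_le (μ := μ)
    (F := fun x u => u ^ k * w t x u)
    (F' := fun x u => u ^ (k + 1) / (1 - t) * w t x u)
    (x₀ := z)
    (bound := fun u => (|u ^ (k + 1) * w t (z + 1) u| + |u ^ (k + 1) * w t (z - 1) u|) / (1 - t))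
    (Metric.ball_mem_nhds z one_pos)
    (Filter.Eventually.of_forall fun x =>
      (((continuous_pow k).mul (w_cont t x)).aestronglyMeasurable))
    (hint z k (by omega))
    (((continuous_pow (k + 1)).div_const (1 - t)).mul (w_cont t z)).aestronglyMeasurable
    (Filter.Eventually.of_forall fun u => by
      intro x hx
      have hxz : |x - z| ≤ 1 := le_of_lt (by simpa [Real.dist_eq] using hx)
      have hw := w_le t z u x h1 hxz
      show ‖u ^ (k + 1) / (1 - t) * w t x u‖
        ≤ (|u ^ (k + 1) * w t (z + 1) u| + |u ^ (k + 1) * w t (z - 1) u|) / (1 - t)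
      rw [Real.norm_eq_abs, abs_mul, abs_div, abs_pow, abs_of_pos h1,
        abs_of_pos (w_pos t x u), habs, habs]
      rw [div_mul_eq_mul_div, div_le_div_iff_of_pos_right h1]
      have hnn : (0:ℝ) ≤ |u| ^ (k + 1) := by positivity
      calc |u| ^ (k + 1) * w t x u
          ≤ |u| ^ (k + 1) * (w t (z + 1) u + w t (z - 1) u) := by
            exact mul_le_mul_of_nonneg_left hw hnn
        _ = |u| ^ (k + 1) * w t (z + 1) u + |u| ^ (k + 1) * w t (z - 1) u := by ring)
    (((hint (z + 1) (k + 1) (by omega)).abs.add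
      (hint (z - 1) (k + 1) (by omega)).abs).div_const (1 - t))
    (Filter.Eventually.of_forall fun u => by
      intro x hx
      have := (w_hasDerivAt t u x).const_mul (u ^ k)
      convert this using 1
      show u ^ (k + 1) / (1 - t) * w t x u = u ^ k * (u / (1 - t) * w t x u)
      rw [pow_succ]
      field_simp
      exact rfl)
  have h2 := key.2
  have h3 : (∫ u, u ^ (k + 1) / (1 - t) * w t z u ∂μ)
      = (∫ u, u ^ (k + 1) * w t z u ∂μ) / (1 - t) := by
    rw [← integral_div]
    congr 1 with u
    ring
  rwa [h3] at h2

lemma post_moment (μ : Measure ℝ) [IsProbabilityMeasure μ] (t z : ℝ) (k : ℕ)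
    (hI : 0 < ∫ u, w t z u ∂μ) :
    ∫ u, u ^ k ∂(post μ t z)
      = (∫ u, u ^ k * w t z u ∂μ) / (∫ u, w t z u ∂μ) := by
  set I : ℝ := ∫ u, w t z u ∂μ with hIdef
  have hmeas : Measurable fun u => Real.toNNReal (w t z u / I) :=
    measurable_real_toNNReal.comp ((w_cont t z).measurable.div_const I)
  have hpost : post μ t z
      = μ.withDensity (fun u => ((Real.toNNReal (w t z u / I) : NNReal) : ENNReal)) := rfl
  rw [hpost, integral_withDensity_eq_integral_smul hmeas]
  have heq : ∀ u : ℝ, Real.toNNReal (w t z u / I) • (u ^ k)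
      = (u ^ k * w t z u) / I := by
    intro u
    rw [NNReal.smul_def, smul_eq_mul, Real.coe_toNNReal _ (div_nonneg (w_pos t z u).le hI.le)]
    ring
  simp_rw [heq]
  rw [integral_div]

theorem stmt6 (μ : Measure ℝ) [IsProbabilityMeasure μ] (t₀ M : ℝ)
    (ht₀ : t₀ ∈ Set.Ico (0 : ℝ) 1)
    (hint : ∀ t ∈ Set.Icc (0 : ℝ) t₀, ∀ z : ℝ, ∀ k : ℕ, k ≤ 2 →
      Integrable (fun u => u ^ k * w t z u) μ)
    (hvar : ∀ t ∈ Set.Icc (0 : ℝ) t₀, ∀ z : ℝ, postVar μ t z ≤ M) :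
    ∀ t ∈ Set.Icc (0 : ℝ) t₀, ∀ z₁ z₂ : ℝ,
      |h μ t z₁ - h μ t z₂| ≤ M / (1 - t₀) * |z₁ - z₂| := by
  intro t ht z₁ z₂
  have h1t₀ : 0 < 1 - t₀ := by linarith [ht₀.2]
  have h1t : 0 < 1 - t := by linarith [ht.2, ht₀.2]
  set G : ℕ → ℝ → ℝ := fun k z => ∫ u, u ^ k * w t z u ∂μ with hG
  have hintz := hint t ht
  -- G 0 z = ∫ w
  have hG0 : ∀ z, G 0 z = ∫ u, w t z u ∂μ := by
    intro z; simp [hG]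
  have hG0pos : ∀ z, 0 < G 0 z := by
    intro z
    rw [hG0]
    have hnn : 0 ≤ fun u => w t z u := fun u => (w_pos t z u).le
    have hi : Integrable (fun u => w t z u) μ := by
      simpa using hintz z 0 (by omega)
    rw [integral_pos_iff_support_of_nonneg hnn hi]
    have : Function.support (fun u => w t z u) = Set.univ := by
      ext u; simp [(w_pos t z u).ne']
    rw [this]
    simp
  -- variance formula
  have hVar : ∀ z, postVar μ t z = G 2 z / G 0 z - (G 1 z / G 0 z) ^ 2 := by
    intro z
    have hI : 0 < ∫ u, w t z u ∂μ := by rw [← hG0]; exact hG0pos z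
    have h2 := post_moment μ t z 2 hI
    have h1 := post_moment μ t z 1 hI
    simp only [pow_one] at h1
    rw [postVar, h2]
    rw [show (∫ u, u ∂(post μ t z)) = (∫ u, u ^ 1 * w t z u ∂μ) / (∫ u, w t z u ∂μ) by
      simpa [pow_one] using h1]
    simp [hG, hG0]
  -- variance nonneg
  have hVarNonneg : ∀ z, 0 ≤ postVar μ t z := by
    intro z
    have hI0 := hG0pos z
    set m : ℝ := G 1 z / G 0 z with hm
    have hnn : 0 ≤ ∫ u, (u - m) ^ 2 * w t z u ∂μ :=
      integral_nonneg fun u => mul_nonneg (sq_nonneg _) (w_pos t z u).le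
    have hexp : ∫ u, (u - m) ^ 2 * w t z u ∂μ
        = G 2 z - 2 * m * G 1 z + m ^ 2 * G 0 z := by
      have heq : (fun u => (u - m) ^ 2 * w t z u)
          = fun u => u ^ 2 * w t z u - 2 * m * (u ^ 1 * w t z u) + m ^ 2 * (u ^ 0 * w t z u) := by
        ext u; ring
      have i2 : Integrable (fun u => u ^ 2 * w t z u) μ := hintz z 2 (by omega)
      have i1 : Integrable (fun u => 2 * m * (u ^ 1 * w t z u)) μ :=
        (hintz z 1 (by omega)).const_mul _
      have i0 : Integrable (fun u => m ^ 2 * (u ^ 0 * w t z u)) μ :=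
        (hintz z 0 (by omega)).const_mul _
      have i21 : Integrable (fun u => u ^ 2 * w t z u - 2 * m * (u ^ 1 * w t z u)) μ :=
        i2.sub i1
      rw [heq, integral_add i21 i0, integral_sub i2 i1, integral_const_mul,
        integral_const_mul]
    have key : 0 ≤ G 2 z - 2 * m * G 1 z + m ^ 2 * G 0 z := hexp ▸ hnn
    have hmG0 : m * G 0 z = G 1 z := div_mul_cancel₀ _ hI0.ne'
    have key2 : 0 ≤ G 2 z * G 0 z - G 1 z ^ 2 := by nlinarith [mul_nonneg key hI0.le]
    have heq2 : G 2 z / G 0 z - (G 1 z / G 0 z) ^ 2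
        = (G 2 z * G 0 z - G 1 z ^ 2) / (G 0 z) ^ 2 := by
      field_simp
    rw [hVar z, heq2]
    positivity
  -- derivatives
  have hd0 := G_deriv μ t h1t hintz 0 (by omega)
  have hd1 := G_deriv μ t h1t hintz 1 (by omega)
  have hder : ∀ z, HasDerivAt (fun z => h μ t z) (postVar μ t z / (1 - t)) z := by
    intro z
    have hq := (hd1 z).div (hd0 z) (hG0pos z).ne'
    have hfun : (fun z => h μ t z)
        = fun z => (∫ u, u ^ 1 * w t z u ∂μ) / ∫ u, u ^ 0 * w t z u ∂μ := by
      funext z'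
      simp [h]
    rw [hfun]
    refine hq.congr_deriv ?_
    symm
    rw [hVar z]
    have hI0 := hG0pos z
    have hG0z : G 0 z = ∫ u, u ^ 0 * w t z u ∂μ := rfl
    have hG1z : G 1 z = ∫ u, u ^ 1 * w t z u ∂μ := rfl
    have hG2z : G 2 z = ∫ u, u ^ 2 * w t z u ∂μ := rfl
    rw [← hG0z, ← hG1z, ← hG2z]
    field_simp
  have hM : 0 ≤ M := le_trans (hVarNonneg 0) (hvar t ht 0)
  have hbound : ∀ z : ℝ, ‖postVar μ t z / (1 - t)‖ ≤ M / (1 - t₀) := by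
    intro z
    rw [Real.norm_eq_abs, abs_of_nonneg (div_nonneg (hVarNonneg z) h1t.le)]
    calc postVar μ t z / (1 - t) ≤ M / (1 - t) := by
          gcongr
          exact hvar t ht z
      _ ≤ M / (1 - t₀) := by
          gcongr
          linarith [ht.2]
  have key := Convex.norm_image_sub_le_of_norm_hasDerivWithin_le
    (f := fun z => h μ t z) (f' := fun z => postVar μ t z / (1 - t))
    (fun x _ => (hder x).hasDerivWithinAt) (fun x _ => hbound x)
    convex_univ (mem_univ z₂) (mem_univ z₁)
  simpa [Real.norm_eq_abs] using key
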